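/- arXiv:2208.08108 — 2 statements merged into one kernel-verified Lean document; each statement's English description precedes it below -/
import Mathlib

section
/- Let φ: ℝ → ℝ be convex with subgradient φ' and define the Bregman loss ρ(y,ξ) = φ(y) - φ(ξ) + φ'(ξ)(ξ - y). Then for any integrable real random variable Y with E[|φ(Y)|] < ∞ and mean μ = E[Y], and any ξ ∈ ℝ, E[ρ(Y,μ)] ≤ E[ρ(Y,ξ)]. If φ is strictly convex, equality holds only if ξ = μ. -/
open MeasureTheory

/-- Bregman losses are consistent for the mean; strictly so if φ is strictly convex. -/
theorem bregman_loss_consistent_for_mean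
    {Ω : Type*} [MeasurableSpace Ω] (μ : Measure Ω) [IsProbabilityMeasure μ]
    (Y : Ω → ℝ) (hY : Measurable Y) (hYint : Integrable Y μ)
    (φ φ' : ℝ → ℝ) (hconv : ConvexOn ℝ Set.univ φ)
    (hsub : ∀ ξ z : ℝ, φ ξ + φ' ξ * (z - ξ) ≤ φ z)
    (hφint : Integrable (fun ω => φ (Y ω)) μ)
    (ξ : ℝ) :
    (∫ ω, (φ (Y ω) - φ (∫ ω', Y ω' ∂μ) + φ' (∫ ω', Y ω' ∂μ) * ((∫ ω', Y ω' ∂μ) - Y ω)) ∂μ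
        ≤ ∫ ω, (φ (Y ω) - φ ξ + φ' ξ * (ξ - Y ω)) ∂μ) ∧
      (StrictConvexOn ℝ Set.univ φ →
        (∫ ω, (φ (Y ω) - φ (∫ ω', Y ω' ∂μ) + φ' (∫ ω', Y ω' ∂μ) * ((∫ ω', Y ω' ∂μ) - Y ω)) ∂μ
          = ∫ ω, (φ (Y ω) - φ ξ + φ' ξ * (ξ - Y ω)) ∂μ) →
        ξ = ∫ ω, Y ω ∂μ) := by
  set m := ∫ ω, Y ω ∂μ with hm
  have key : ∀ c : ℝ, ∫ ω, (φ (Y ω) - φ c + φ' c * (c - Y ω)) ∂μ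
      = (∫ ω, φ (Y ω) ∂μ) - φ c + φ' c * (c - m) := by
    intro c
    have h1 : Integrable (fun ω => φ (Y ω) - φ c) μ := hφint.sub (integrable_const _)
    have h2 : Integrable (fun ω => φ' c * (c - Y ω)) μ :=
      (((integrable_const c).sub hYint).const_mul _)
    rw [integral_add h1 h2, integral_sub hφint (integrable_const _), integral_const_mul,
      integral_sub (integrable_const _) hYint, integral_const]
    simp [hm]
  rw [key, key]
  constructor
  · have h := hsub ξ m
    nlinarith [h]
  · intro hstrict heq
    by_contra hne
    have hne' : ξ ≠ m := hne
    have hmid := hstrict.2 (Set.mem_univ ξ) (Set.mem_univ m) hne'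
      (by norm_num : (0:ℝ) < 1/2) (by norm_num : (0:ℝ) < 1/2) (by norm_num)
    simp only [smul_eq_mul] at hmid
    have hsub2 := hsub ξ (1/2 * ξ + 1/2 * m)
    have heq' : φ m = φ ξ + φ' ξ * (m - ξ) := by nlinarith [heq]
    nlinarith [hmid, hsub2, heq']
end

section
/- Let g: ℝ → ℝ be nondecreasing and define the generalized piecewise linear loss ρ(y,ξ) = (1{y ≤ ξ} - α)(g(ξ) - g(y)) for α ∈ (0,1). If Y is a random variable with E[|g(Y)|] < ∞ and q is a lower α-quantile of Y, then E[ρ(Y,q)] ≤ E[ρ(Y,ξ)] for all ξ ∈ ℝ. -/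
open MeasureTheory

section Aux

variable {Ω : Type*} [MeasurableSpace Ω] {μ : Measure Ω} [IsProbabilityMeasure μ]

lemma gpl_ind_eq (p : Ω → Prop) [DecidablePred p] :
    (fun ω => if p ω then (1:ℝ) else 0) = Set.indicator {ω | p ω} 1 := by
  funext ω; by_cases h : p ω <;> simp [h]

lemma gpl_ind_integrable (p : Ω → Prop) [DecidablePred p] (hp : MeasurableSet {ω | p ω}) :
    Integrable (fun ω => if p ω then (1:ℝ) else 0) μ := by
  rw [gpl_ind_eq p]; exact (integrable_const 1).indicator hp

lemma gpl_ind_integral (p : Ω → Prop) [DecidablePred p] (hp : MeasurableSet {ω | p ω}) :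
    ∫ ω, (if p ω then (1:ℝ) else 0) ∂μ = (μ {ω | p ω}).toReal := by
  rw [gpl_ind_eq p]; exact integral_indicator_one hp

lemma gpl_integrable (Y : Ω → ℝ) (hY : Measurable Y)
    (g : ℝ → ℝ) (hgint : Integrable (fun ω => g (Y ω)) μ) (α t : ℝ)
    (hα : α ∈ Set.Ioo (0:ℝ) 1) :
    Integrable (fun ω => ((if Y ω ≤ t then (1 : ℝ) else 0) - α) * (g t - g (Y ω))) μ := by
  apply Integrable.bdd_mul (c := 1) ((integrable_const (g t)).sub hgint)
  · exact ((Measurable.ite (hY measurableSet_Iic) measurable_const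
      measurable_const).sub measurable_const).aestronglyMeasurable
  · refine Filter.Eventually.of_forall fun ω => ?_
    obtain ⟨h0, h1⟩ := hα
    by_cases h : Y ω ≤ t <;> simp [h, Real.norm_eq_abs, abs_le] <;> constructor <;> linarith

lemma gpl_aux_integrable (c : ℝ) (p : Ω → Prop) [DecidablePred p]
    (hp : MeasurableSet {ω | p ω}) (α : ℝ) :
    Integrable (fun ω => c * ((if p ω then (1:ℝ) else 0) - α)) μ :=
  (((gpl_ind_integrable p hp).sub (integrable_const α)).const_mul c)

lemma gpl_aux_integral (c : ℝ) (p : Ω → Prop) [DecidablePred p]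
    (hp : MeasurableSet {ω | p ω}) (α : ℝ) :
    ∫ ω, c * ((if p ω then (1:ℝ) else 0) - α) ∂μ = c * ((μ {ω | p ω}).toReal - α) := by
  rw [integral_const_mul, integral_sub (gpl_ind_integrable p hp) (integrable_const α),
    gpl_ind_integral p hp, integral_const]
  simp

end Aux

/-- Generalized piecewise linear losses are consistent for the lower α-quantile. -/
theorem gpl_loss_consistent_for_quantile
    {Ω : Type*} [MeasurableSpace Ω] (μ : Measure Ω) [IsProbabilityMeasure μ]
    (Y : Ω → ℝ) (hY : Measurable Y)
    (g : ℝ → ℝ) (hg : Monotone g)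
    (hgint : Integrable (fun ω => g (Y ω)) μ)
    (α : ℝ) (hα : α ∈ Set.Ioo (0 : ℝ) 1)
    (q : ℝ)
    (hq1 : (μ {ω | Y ω < q}).toReal ≤ α)
    (hq2 : α ≤ (μ {ω | Y ω ≤ q}).toReal)
    (ξ : ℝ) :
    ∫ ω, ((if Y ω ≤ q then (1 : ℝ) else 0) - α) * (g q - g (Y ω)) ∂μ
      ≤ ∫ ω, ((if Y ω ≤ ξ then (1 : ℝ) else 0) - α) * (g ξ - g (Y ω)) ∂μ := by
  obtain ⟨hα0, hα1⟩ := hα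
  have hf1 := gpl_integrable Y hY g hgint α q ⟨hα0, hα1⟩
  have hf2 := gpl_integrable Y hY g hgint α ξ ⟨hα0, hα1⟩
  by_cases hqξ : q ≤ ξ
  · set h : Ω → ℝ := fun ω => (g ξ - g q) * ((if Y ω ≤ q then (1:ℝ) else 0) - α) with hh
    have hps : MeasurableSet {ω | Y ω ≤ q} := hY measurableSet_Iic
    have hhint : Integrable h μ := gpl_aux_integrable _ _ hps α
    have hptwise : ∀ ω, ((if Y ω ≤ q then (1 : ℝ) else 0) - α) * (g q - g (Y ω)) + h ω
        ≤ ((if Y ω ≤ ξ then (1 : ℝ) else 0) - α) * (g ξ - g (Y ω)) := by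
      intro ω
      simp only [hh]
      by_cases h1 : Y ω ≤ q
      · have h2 : Y ω ≤ ξ := h1.trans hqξ
        rw [if_pos h1, if_pos h2]
        nlinarith [hg h1, hg h2, hg hqξ]
      · by_cases h2 : Y ω ≤ ξ
        · rw [if_neg h1, if_pos h2]
          nlinarith [hg h2, hg hqξ, hg (le_of_not_ge h1)]
        · rw [if_neg h1, if_neg h2]
          nlinarith [hg hqξ, hg (le_of_not_ge h1), hg (le_of_not_ge h2)]
    have hpos : 0 ≤ ∫ ω, h ω ∂μ := by
      rw [hh, gpl_aux_integral _ _ hps α]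
      exact mul_nonneg (by linarith [hg hqξ]) (by linarith)
    calc ∫ ω, ((if Y ω ≤ q then (1 : ℝ) else 0) - α) * (g q - g (Y ω)) ∂μ
        ≤ ∫ ω, (((if Y ω ≤ q then (1 : ℝ) else 0) - α) * (g q - g (Y ω)) + h ω) ∂μ := by
          rw [integral_add hf1 hhint]; linarith
      _ ≤ _ := integral_mono (hf1.add hhint) hf2 hptwise
  · push_neg at hqξ
    set h : Ω → ℝ := fun ω => (g ξ - g q) * ((if Y ω < q then (1:ℝ) else 0) - α) with hh
    have hps : MeasurableSet {ω | Y ω < q} := hY measurableSet_Iio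
    have hhint : Integrable h μ := gpl_aux_integrable _ _ hps α
    have hptwise : ∀ ω, ((if Y ω ≤ q then (1 : ℝ) else 0) - α) * (g q - g (Y ω)) + h ω
        ≤ ((if Y ω ≤ ξ then (1 : ℝ) else 0) - α) * (g ξ - g (Y ω)) := by
      intro ω
      simp only [hh]
      by_cases h2 : Y ω ≤ ξ
      · have h1 : Y ω ≤ q := h2.trans hqξ.le
        have h3 : Y ω < q := lt_of_le_of_lt h2 hqξ
        rw [if_pos h1, if_pos h3, if_pos h2]
        nlinarith [hg h1, hg h2, hg hqξ.le]
      · by_cases h3 : Y ω < q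
        · rw [if_pos h3.le, if_pos h3, if_neg h2]
          nlinarith [hg h3.le, hg hqξ.le, hg (le_of_not_ge h2)]
        · by_cases h1 : Y ω ≤ q
          · have hyq : Y ω = q := le_antisymm h1 (not_lt.mp h3)
            rw [if_pos h1, if_neg h3, if_neg h2, hyq]
            nlinarith [hg hqξ.le]
          · rw [if_neg h1, if_neg h3, if_neg h2]
            nlinarith [hg hqξ.le, hg (le_of_not_ge h1), hg (le_of_not_ge h2)]
    have hpos : 0 ≤ ∫ ω, h ω ∂μ := by
      rw [hh, gpl_aux_integral _ _ hps α]
      nlinarith [hg hqξ.le, hq1]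
    calc ∫ ω, ((if Y ω ≤ q then (1 : ℝ) else 0) - α) * (g q - g (Y ω)) ∂μ
        ≤ ∫ ω, (((if Y ω ≤ q then (1 : ℝ) else 0) - α) * (g q - g (Y ω)) + h ω) ∂μ := by
          rw [integral_add hf1 hhint]; linarith
      _ ≤ _ := integral_mono (hf1.add hhint) hf2 hptwise
end
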